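/- For all integers q ≥ 2, n ≥ 1, d ≥ 1 and every composition w̄ = (w_1,...,w_{q-1}) with w_1 ≥ 1 and w_1+···+w_{q-1} ≤ n, one has the Johnson-type recursion A_q(n,d,w̄) ≤ ⌊(n/w_1)·A_q(n-1,d,(w_1-1,w_2,...,w_{q-1}))⌋. -/

import Mathlib

open Finset

/-- `compOf q n x j` is the number of coordinates of `x` equal to the symbol `j+1`,
for `j : Fin (q-1)`; i.e. the composition of `x` (indexed so that index `j`
corresponds to the symbol `j+1 ∈ {1,...,q-1}`). -/
def compOf (q n : ℕ) (x : Fin n → ℕ) (j : Fin (q - 1)) : ℕ :=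
  (univ.filter fun i => x i = (j : ℕ) + 1).card

/-- `C` is an `(n,d,w̄)_q` constant composition code: a code over the alphabet
`{0,...,q-1}` of length `n`, constant composition `wb`, and minimum Hamming
distance at least `d`. -/
def IsCCC (q n d : ℕ) (wb : Fin (q - 1) → ℕ) (C : Finset (Fin n → ℕ)) : Prop :=
  (∀ x ∈ C, ∀ i, x i < q) ∧ (∀ x ∈ C, ∀ j, compOf q n x j = wb j) ∧
  (∀ x ∈ C, ∀ y ∈ C, x ≠ y → d ≤ hammingDist x y)

/-- `Aqc q n d wb` is the maximum size of an `(n,d,w̄)_q` constant composition code. -/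
noncomputable def Aqc (q n d : ℕ) (wb : Fin (q - 1) → ℕ) : ℕ :=
  sSup {m | ∃ C : Finset (Fin n → ℕ), IsCCC q n d wb C ∧ C.card = m}

/-- `fComp q wb t` is the maximum of the multinomial coefficient `t!/(t₁!⋯t_{q-1}!)`
over all `(w̄,t)`-admissible vectors `t̄`, i.e. those with `∑ tᵢ = t` and `tᵢ ≤ wᵢ`. -/
noncomputable def fComp (q : ℕ) (wb : Fin (q - 1) → ℕ) (t : ℕ) : ℕ :=
  sSup {m | ∃ tb : Fin (q - 1) → ℕ, (∑ j, tb j) = t ∧ (∀ j, tb j ≤ wb j) ∧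
    Nat.multinomial Finset.univ tb = m}

/-- The multinomial coefficient `M(n) = n! / ((n-w)! ⬝ w₁! ⋯ w_{q-1}!)`, as a real number. -/
noncomputable def Mn (q n w : ℕ) (wb : Fin (q - 1) → ℕ) : ℝ :=
  (Nat.factorial n : ℝ) /
    ((Nat.factorial (n - w) : ℝ) * ∏ j, (Nat.factorial (wb j) : ℝ))

section aux
variable {m : ℕ}

lemma card_filter_succAbove (i : Fin (m+1)) (P : Fin (m+1) → Prop) [DecidablePred P] :
    (univ.filter fun k : Fin m => P (i.succAbove k)).card
      = ((univ.erase i).filter P).card := by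
  apply Finset.card_bij (fun k _ => i.succAbove k)
  · intro k hk
    simp only [mem_filter, mem_erase, mem_univ, true_and] at *
    exact ⟨⟨Fin.succAbove_ne i k, trivial⟩, hk⟩
  · intro a _ b _ h
    exact Fin.succAbove_right_injective h
  · intro j hj
    simp only [mem_filter, mem_erase, mem_univ, true_and] at hj
    obtain ⟨k, hk⟩ := Fin.exists_succAbove_eq hj.1.1
    exact ⟨k, by simp [hk, hj.2]⟩

lemma card_filter_eq_erase_add (i : Fin (m+1)) (P : Fin (m+1) → Prop) [DecidablePred P] :
    (univ.filter P).card
      = ((univ.erase i).filter P).card + (if P i then 1 else 0) := by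
  have h : (univ : Finset (Fin (m+1))) = (univ.erase i) ∪ {i} := by
    ext j; by_cases hj : j = i <;> simp [hj]
  nth_rewrite 1 [h]
  rw [filter_union, card_union_of_disjoint, filter_singleton]
  · split <;> simp
  · exact disjoint_filter_filter (disjoint_singleton_right.mpr (notMem_erase i univ))

/-- Puncture a word at coordinate `i`. -/
def punct (i : Fin (m+1)) (x : Fin (m+1) → ℕ) : Fin m → ℕ :=
  fun k => x (i.succAbove k)

lemma punct_inj (i : Fin (m+1)) {x y : Fin (m+1) → ℕ}
    (hxy : punct i x = punct i y) (hi : x i = y i) : x = y := by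
  funext j
  rcases eq_or_ne j i with rfl | hj
  · exact hi
  · obtain ⟨k, rfl⟩ := Fin.exists_succAbove_eq hj
    exact congrFun hxy k

lemma compOf_punct {q : ℕ} (hq : 2 ≤ q) (i : Fin (m+1)) (x : Fin (m+1) → ℕ)
    (hx : x i = 1) (j : Fin (q-1)) :
    compOf q m (punct i x) j
      = compOf q (m+1) x j - (if (j:ℕ) = 0 then 1 else 0) := by
  have h1 : compOf q m (punct i x) j
      = ((univ.erase i).filter fun l => x l = (j:ℕ)+1).card :=
    card_filter_succAbove i (fun l => x l = (j:ℕ)+1)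
  have h2 : compOf q (m+1) x j
      = ((univ.erase i).filter fun l => x l = (j:ℕ)+1).card
        + (if x i = (j:ℕ)+1 then 1 else 0) :=
    card_filter_eq_erase_add i (fun l => x l = (j:ℕ)+1)
  have h3 : (x i = (j:ℕ)+1) ↔ (j:ℕ) = 0 := by rw [hx]; omega
  rw [h1, h2]
  by_cases hj : (j:ℕ) = 0
  · rw [if_pos hj, if_pos (h3.mpr hj)]; omega
  · rw [if_neg hj, if_neg (fun h => hj (h3.mp h))]; omega

lemma hammingDist_punct (i : Fin (m+1)) (x y : Fin (m+1) → ℕ) (hi : x i = y i) :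
    hammingDist (punct i x) (punct i y) = hammingDist x y := by
  have h1 : hammingDist (punct i x) (punct i y)
      = ((univ.erase i).filter fun l => x l ≠ y l).card :=
    card_filter_succAbove i (fun l => x l ≠ y l)
  have h2 : hammingDist x y
      = ((univ.erase i).filter fun l => x l ≠ y l).card
        + (if x i ≠ y i then 1 else 0) :=
    card_filter_eq_erase_add i (fun l => x l ≠ y l)
  rw [h1, h2, if_neg (by simp [hi])]
  omega

end aux

lemma card_le_of_isCCC {q n d : ℕ} {wb : Fin (q-1) → ℕ} {C : Finset (Fin n → ℕ)}
    (hq : 0 < q) (h : IsCCC q n d wb C) : C.card ≤ q ^ n := by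
  classical
  have key : C.card ≤ (univ : Finset (Fin n → Fin q)).card := by
    apply Finset.card_le_card_of_injOn
      (fun x => fun i => (⟨x i % q, Nat.mod_lt _ hq⟩ : Fin q))
    · intros; simp
    · intro x hx y hy hxy
      funext i
      have h1 := congrFun hxy i
      have hx' := h.1 x hx i
      have hy' := h.1 y hy i
      simpa [Fin.ext_iff, Nat.mod_eq_of_lt hx', Nat.mod_eq_of_lt hy'] using h1
  simpa [Fintype.card_fun] using key

lemma le_Aqc {q n d : ℕ} {wb : Fin (q-1) → ℕ} {C : Finset (Fin n → ℕ)}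
    (hq : 0 < q) (h : IsCCC q n d wb C) : C.card ≤ Aqc q n d wb := by
  apply le_csSup
  · exact ⟨q ^ n, by rintro _ ⟨D, hD, rfl⟩; exact card_le_of_isCCC hq hD⟩
  · exact ⟨C, h, rfl⟩

lemma Aqc_le {q n d : ℕ} {wb : Fin (q-1) → ℕ} {k : ℕ}
    (h : ∀ C : Finset (Fin n → ℕ), IsCCC q n d wb C → C.card ≤ k) :
    Aqc q n d wb ≤ k := by
  apply csSup_le
  · exact ⟨0, ∅, ⟨by simp, by simp, by simp⟩, card_empty⟩
  · rintro _ ⟨C, hC, rfl⟩; exact h C hC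


theorem stmt5 (q n d : ℕ) (wb : Fin (q - 1) → ℕ) (hq : 2 ≤ q) (hn : 1 ≤ n) (hd : 1 ≤ d)
    (hw1 : 1 ≤ wb ⟨0, by omega⟩) (hwn : ∑ j, wb j ≤ n) :
    Aqc q n d wb ≤
      Nat.floor (((n : ℝ) / (wb ⟨0, by omega⟩ : ℝ)) *
        (Aqc q (n - 1) d
          (Function.update wb ⟨0, by omega⟩ (wb ⟨0, by omega⟩ - 1)) : ℝ)) := by
  classical
  obtain ⟨m, rfl⟩ : ∃ m, n = m + 1 := ⟨n - 1, by omega⟩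
  set j0 : Fin (q-1) := ⟨0, by omega⟩ with hj0
  set wb' : Fin (q-1) → ℕ := Function.update wb j0 (wb j0 - 1) with hwb'
  have hm1 : m + 1 - 1 = m := by omega
  rw [hm1]
  set A' : ℕ := Aqc q m d wb' with hA'
  apply Aqc_le
  intro C hC
  apply Nat.le_floor
  -- key counting inequality over ℕ
  have hsub : ∀ i : Fin (m+1),
      (C.filter fun x => x i = 1).card ≤ A' := by
    intro i
    set Ci := C.filter fun x => x i = 1 with hCi
    have hinj : Set.InjOn (punct i) ↑Ci := by
      intro x hx y hy hxy
      simp only [hCi, coe_filter, Set.mem_setOf_eq] at hx hy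
      exact punct_inj i hxy (hx.2.trans hy.2.symm)
    have hcard : (Ci.image (punct i)).card = Ci.card :=
      Finset.card_image_of_injOn hinj
    have hmem : ∀ x ∈ Ci, x ∈ C ∧ x i = 1 := by
      intro x hx; simpa [hCi] using hx
    have hccc : IsCCC q m d wb' (Ci.image (punct i)) := by
      refine ⟨?_, ?_, ?_⟩
      · rintro _ hu k
        obtain ⟨x, hx, rfl⟩ := Finset.mem_image.mp hu
        exact hC.1 x (hmem x hx).1 _
      · rintro _ hu j
        obtain ⟨x, hx, rfl⟩ := Finset.mem_image.mp hu
        have hj0v : (j = j0) ↔ (j:ℕ) = 0 := by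
          rw [Fin.ext_iff]
        rw [compOf_punct hq i x (hmem x hx).2 j, hC.2.1 x (hmem x hx).1 j,
          hwb', Function.update_apply]
        by_cases hj : (j:ℕ) = 0
        · rw [if_pos hj, if_pos (hj0v.mpr hj), hj0v.mpr hj]
        · rw [if_neg hj, if_neg (fun h => hj (hj0v.mp h))]; omega
      · rintro _ hu _ hv huv
        obtain ⟨x, hx, rfl⟩ := Finset.mem_image.mp hu
        obtain ⟨y, hy, rfl⟩ := Finset.mem_image.mp hv
        have hne : x ≠ y := fun h => huv (by rw [h])
        rw [hammingDist_punct i x y (((hmem x hx).2).trans ((hmem y hy).2).symm)]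
        exact hC.2.2 x (hmem x hx).1 y (hmem y hy).1 hne
    calc Ci.card = (Ci.image (punct i)).card := hcard.symm
      _ ≤ A' := le_Aqc (by omega) hccc
  have hsum : ∑ i : Fin (m+1), (C.filter fun x => x i = 1).card = C.card * wb j0 := by
    have h1 : ∀ i : Fin (m+1),
        (C.filter fun x => x i = 1).card = ∑ x ∈ C, if x i = 1 then 1 else 0 := by
      intro i; rw [Finset.card_filter]
    simp only [h1]
    rw [Finset.sum_comm]
    have h2 : ∀ x ∈ C, (∑ i : Fin (m+1), if x i = 1 then 1 else 0) = wb j0 := by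
      intro x hx
      have := hC.2.1 x hx j0
      rw [← this, compOf, Finset.card_filter]
    rw [Finset.sum_congr rfl h2, Finset.sum_const, smul_eq_mul]
  have hkey : C.card * wb j0 ≤ (m+1) * A' := by
    rw [← hsum]
    have hle : ∑ i : Fin (m+1), (C.filter fun x => x i = 1).card
        ≤ ∑ _i : Fin (m+1), A' := Finset.sum_le_sum fun i _ => hsub i
    have heq : ∑ _i : Fin (m+1), A' = (m+1) * A' := by
      rw [Finset.sum_const, smul_eq_mul, Finset.card_univ, Fintype.card_fin]
    exact le_trans hle (le_of_eq heq)
  have hw1R : (0:ℝ) < (wb j0 : ℝ) := by exact_mod_cast hw1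
  rw [div_mul_eq_mul_div, le_div_iff₀ hw1R]
  calc (C.card : ℝ) * (wb j0 : ℝ) = ((C.card * wb j0 : ℕ) : ℝ) := by push_cast; ring
    _ ≤ (((m+1) * A' : ℕ) : ℝ) := by exact_mod_cast hkey
    _ = ((m+1 : ℕ) : ℝ) * (A' : ℝ) := by push_cast; ring
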